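/- arXiv:math/0401446 — 2 statements merged into one kernel-verified Lean document; each statement's English description precedes it below -/
import Mathlib

section
/- Let p, q, r be paths (walks) in a quiver Q and suppose pq = qr (as concatenations of paths). If p = a_1 a_2 ⋯ a_t is a composition of arrows a_1, …, a_t with t ≥ 1, then there exist s ≥ 0 and 0 ≤ i < t such that q = p^s a_1 ⋯ a_i and r = a_{i+1} ⋯ a_t a_1 ⋯ a_i (where i = 0 means q = p^s and r = p). In particular, p and r are closed walks in Q (each starts and ends at the same vertex). -/
open Quiver

/-- The `s`-fold concatenation of a closed walk with itself. -/
def pathPow {V : Type*} [Quiver V] {a : V} (p : Quiver.Path a a) : ℕ → Quiver.Path a a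
  | 0 => Quiver.Path.nil
  | n + 1 => (pathPow p n).comp p

lemma pathPow_comm {V : Type*} [Quiver V] {a : V} (p : Quiver.Path a a) (n : ℕ) :
    p.comp (pathPow p n) = (pathPow p n).comp p := by
  induction n with
  | zero => simp [pathPow]
  | succ n ih =>
    show p.comp ((pathPow p n).comp p) = _
    rw [← Quiver.Path.comp_assoc, ih]
    rfl

/-- Suffix splitting: if `p₁ q₁ = p₂ q₂` and `q₁` is no longer than `q₂`, then `q₁` is a
suffix of `q₂`. -/
lemma suffix_split {V : Type*} [Quiver V] {a b c d : V} :
    ∀ {q₁ : Quiver.Path b d} (p₁ : Quiver.Path a b) (p₂ : Quiver.Path a c)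
      (q₂ : Quiver.Path c d),
      p₁.comp q₁ = p₂.comp q₂ → q₁.length ≤ q₂.length →
      ∃ e : Quiver.Path c b, q₂ = e.comp q₁ ∧ p₁ = p₂.comp e := by
  intro q₁
  induction q₁ with
  | nil =>
    intro p₁ p₂ q₂ h _
    exact ⟨q₂, (q₂.comp_nil).symm, by simpa using h⟩
  | @cons x y q₁' f ih =>
    intro p₁ p₂ q₂ h hle
    cases q₂ with
    | nil => simp at hle
    | @cons z w q₂' g =>
      rw [Quiver.Path.comp_cons, Quiver.Path.comp_cons] at h
      obtain rfl : x = z := Quiver.Path.obj_eq_of_cons_eq_cons h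
      have hq : p₁.comp q₁' = p₂.comp q₂' := eq_of_heq (Quiver.Path.heq_of_cons_eq_cons h)
      have hf : f = g := eq_of_heq (Quiver.Path.hom_heq_of_cons_eq_cons h)
      subst hf
      obtain ⟨e, he1, he2⟩ := ih p₁ p₂ q₂' hq (by simpa using hle)
      exact ⟨e, by rw [he1, Quiver.Path.comp_cons], he2⟩

/-- If `p q = q r` as paths in a quiver and `p = a₁ ⋯ a_t` with `t ≥ 1`, then there are
`s ≥ 0` and a decomposition `p = p₁ p₂` with `ℓ(p₁) < t` (where `p₁ = a₁ ⋯ a_i`) such that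
`q = pˢ p₁` and `r = p₂ p₁`.  In particular `p` and `r` are closed walks (this is encoded
in their types). -/
theorem stmt0 {V : Type*} [Quiver V] {a b : V}
    (p : Quiver.Path a a) (q : Quiver.Path a b) (r : Quiver.Path b b)
    (t : ℕ) (ht : 1 ≤ t) (hlen : p.length = t)
    (h : p.comp q = q.comp r) :
    ∃ (s : ℕ) (p₁ : Quiver.Path a b) (p₂ : Quiver.Path b a),
      p = p₁.comp p₂ ∧ p₁.length < t ∧
      q = (pathPow p s).comp p₁ ∧ r = p₂.comp p₁ := by
  subst hlen
  generalize hn : q.length = n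
  induction n using Nat.strong_induction_on generalizing q with
  | _ n IH =>
  subst hn
  have hrlen : r.length = p.length := by
    have := congrArg Quiver.Path.length h
    simp only [Quiver.Path.length_comp] at this
    omega
  by_cases hc : q.length < p.length
  · obtain ⟨e, he1, he2⟩ := suffix_split p q r h (by omega)
    exact ⟨0, q, e, he2, hc, by simp [pathPow], he1⟩
  · obtain ⟨q', hq1, hq2⟩ := suffix_split q p q h.symm (by omega)
    -- hq2 : q = p.comp q'
    have hq'len : q'.length < q.length := by
      have := congrArg Quiver.Path.length hq2
      simp only [Quiver.Path.length_comp] at this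
      omega
    have h' : p.comp q' = q'.comp r := by
      have : p.comp (p.comp q') = (p.comp q').comp r := by rw [← hq2]; exact h
      rw [Quiver.Path.comp_assoc] at this
      exact Quiver.Path.comp_injective_right p this
    obtain ⟨s, p₁, p₂, h1, h2, h3, h4⟩ := IH q'.length hq'len q' h' rfl
    refine ⟨s + 1, p₁, p₂, h1, h2, ?_, h4⟩
    rw [hq2, h3, ← Quiver.Path.comp_assoc, pathPow_comm]
    rfl
end

section
/- Let E be a graded K-algebra with a multiplicative homogeneous basis satisfying the cancellation properties, and let z = Σ α_i g_i be a homogeneous element of the graded centre of E written in the basis with all α_i ≠ 0. If g is any basis element with g z ≠ 0 (in the basis expansion), then there exist indices i, j with g g_i = g_j g ≠ 0 and α_i = α_j. (Pairing of terms under central elements.) -/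
/-- In the multiplicative-basis framework: if `z = Σ αᵢ b(gᵢ)` is a homogeneous
even-degree element of the graded centre (so `z` commutes with all basis elements) with
all `αᵢ ≠ 0`, and `g` is a basis element with `b(g) z ≠ 0`, then there are indices
`i, j` in the support with `b(g) b(gᵢ) = b(gⱼ) b(g) ≠ 0` and `αᵢ = αⱼ`. -/
theorem stmt9 {K E ι : Type*} [Field K] [Ring E] [Algebra K E]
    (b : Module.Basis ι K E) (deg : ι → ℕ)
    (hmult : ∀ i j : ι, b i * b j = 0 ∨
      ∃ k, deg k = deg i + deg j ∧ b i * b j = b k)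
    (hlcancel : ∀ i j j' : ι, b i * b j = b i * b j' → b i * b j ≠ 0 → j = j')
    (hrcancel : ∀ i j j' : ι, b j * b i = b j' * b i → b j * b i ≠ 0 → j = j')
    (n : ℕ) (s : Finset ι) (hdeg : ∀ i ∈ s, deg i = 2 * n)
    (α : ι → K) (hα : ∀ i ∈ s, α i ≠ 0)
    (z : E) (hzdef : z = ∑ i ∈ s, α i • b i)
    (hcentral : ∀ g : ι, z * b g = b g * z)
    (g : ι) (hgz : b g * z ≠ 0) :
    ∃ i ∈ s, ∃ j ∈ s, b g * b i = b j * b g ∧ b g * b i ≠ 0 ∧ α i = α j := by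
  classical
  have h1 : b g * z = ∑ i ∈ s, α i • (b g * b i) := by
    rw [hzdef, Finset.mul_sum]
    exact Finset.sum_congr rfl fun i _ => (mul_smul_comm _ _ _)
  have h2 : z * b g = ∑ i ∈ s, α i • (b i * b g) := by
    rw [hzdef, Finset.sum_mul]
    exact Finset.sum_congr rfl fun i _ => (smul_mul_assoc _ _ _)
  -- find i with b g * b i ≠ 0
  have : ∃ i ∈ s, α i • (b g * b i) ≠ 0 := by
    by_contra h
    push_neg at h
    exact hgz (h1.trans (Finset.sum_eq_zero h))
  obtain ⟨i, hi, hne⟩ := this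
  have hgi : b g * b i ≠ 0 := fun h0 => hne (by rw [h0, smul_zero])
  obtain ⟨k, -, hk⟩ := (hmult g i).resolve_left hgi
  have hbk : (b k : E) ≠ 0 := b.ne_zero k
  -- coordinate of b g * z at k equals α i
  have coordL : b.repr (b g * z) k = α i := by
    rw [h1, map_sum]
    rw [Finset.sum_apply']
    rw [Finset.sum_eq_single i]
    · rw [map_smul, hk, b.repr_self]
      simp
    · intro i' hi' hii'
      rcases hmult g i' with h0 | ⟨k', -, hk'⟩
      · rw [h0]; simp
      · rw [map_smul, hk', b.repr_self, Finsupp.smul_apply, Finsupp.single_apply]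
        rcases eq_or_ne k' k with rfl | hkk
        · exact absurd (hlcancel g i' i (by rw [hk', hk]) (hk' ▸ hbk)) hii'
        · simp [hkk]
    · intro h; exact absurd hi h
  -- coordinate of z * b g at k
  have coordR : b.repr (z * b g) k = α i := by
    rw [hcentral g]; exact coordL
  have hαi : α i ≠ 0 := hα i hi
  -- find j with α j • (b j * b g) contributing
  have : ∃ j ∈ s, b.repr (α j • (b j * b g)) k ≠ 0 := by
    by_contra h
    push_neg at h
    apply hαi
    rw [← coordR, h2, map_sum, Finset.sum_apply']
    exact Finset.sum_eq_zero h
  obtain ⟨j, hj, hjne⟩ := this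
  have hjg : b j * b g ≠ 0 := fun h0 => hjne (by rw [h0, smul_zero]; simp)
  obtain ⟨k', -, hk'⟩ := (hmult j g).resolve_left hjg
  have hkk' : k' = k := by
    by_contra hne'
    apply hjne
    rw [hk', map_smul, b.repr_self, Finsupp.smul_apply, Finsupp.single_apply]
    simp [hne']
  rw [hkk'] at hk'
  -- coordinate of z * b g at k equals α j
  have coordR2 : b.repr (z * b g) k = α j := by
    rw [h2, map_sum, Finset.sum_apply']
    rw [Finset.sum_eq_single j]
    · rw [map_smul, hk', b.repr_self]; simp
    · intro j' hj' hjj'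
      rcases hmult j' g with h0 | ⟨k'', -, hk''⟩
      · rw [h0]; simp
      · rw [map_smul, hk'', b.repr_self, Finsupp.smul_apply, Finsupp.single_apply]
        rcases eq_or_ne k'' k with rfl | hkk
        · exact absurd (hrcancel g j' j (by rw [hk'', hk']) (hk'' ▸ hbk)) hjj'
        · simp [hkk]
    · intro h; exact absurd hj h
  exact ⟨i, hi, j, hj, by rw [hk, hk'], hgi, by rw [← coordL, ← hcentral g, coordR2]⟩
end
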